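/- Let u ∈ C¹(B_ρⁿ(0)) with u(0)=0, Du(0)=0, and suppose Du is α-Hölder continuous with seminorm [Du]_α on B_ρⁿ(0). Then for every v ∈ C¹_c(B_ρⁿ(0)), ∫_{B_ρⁿ(0)} (Dv · Du)/√(1+|Du|²) dx ≤ [Du]_α · ρ^α · ∫_{B_ρⁿ(0)} √((1+|Du|²)|Dv|² − (Du·Dv)²) dx. -/

import Mathlib

open MeasureTheory Metric Set Filter
open scoped ENNReal Topology RealInnerProductSpace

/-- If `u ∈ C¹(B_ρ)` with `u 0 = 0`, `Du 0 = 0` and `Du` is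
`α`-Hölder with seminorm `[Du]_α` on the ball, then for every `v ∈ C¹_c(B_ρ)`,
`∫ (Dv·Du)/√(1+|Du|²) ≤ [Du]_α ρ^α ∫ √((1+|Du|²)|Dv|² − (Du·Dv)²)`. -/
theorem stmt2 (n : ℕ) (α ρ C : ℝ) (hα : α ∈ Set.Ioo (0:ℝ) 1) (hρ : 0 < ρ) (hC : 0 ≤ C)
    (u : EuclideanSpace ℝ (Fin n) → ℝ)
    (hu : ContDiffOn ℝ 1 u (ball 0 ρ))
    (hu0 : u 0 = 0) (hDu0 : gradient u 0 = 0)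
    (hHolder : ∀ x ∈ ball (0 : EuclideanSpace ℝ (Fin n)) ρ,
      ∀ y ∈ ball (0 : EuclideanSpace ℝ (Fin n)) ρ,
        ‖gradient u x - gradient u y‖ ≤ C * ‖x - y‖ ^ α)
    (v : EuclideanSpace ℝ (Fin n) → ℝ)
    (hv : ContDiff ℝ 1 v) (hvc : HasCompactSupport v)
    (hvs : tsupport v ⊆ ball 0 ρ) :
    ∫ x in ball (0 : EuclideanSpace ℝ (Fin n)) ρ,
        ⟪gradient v x, gradient u x⟫ / Real.sqrt (1 + ‖gradient u x‖ ^ 2)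
      ≤ C * ρ ^ α *
        ∫ x in ball (0 : EuclideanSpace ℝ (Fin n)) ρ,
          Real.sqrt ((1 + ‖gradient u x‖ ^ 2) * ‖gradient v x‖ ^ 2
            - ⟪gradient u x, gradient v x⟫ ^ 2) := by
  set B := ball (0 : EuclideanSpace ℝ (Fin n)) ρ with hB
  set f : EuclideanSpace ℝ (Fin n) → ℝ := fun x =>
    ⟪gradient v x, gradient u x⟫ / Real.sqrt (1 + ‖gradient u x‖ ^ 2) with hf
  set h : EuclideanSpace ℝ (Fin n) → ℝ := fun x =>
    Real.sqrt ((1 + ‖gradient u x‖ ^ 2) * ‖gradient v x‖ ^ 2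
            - ⟪gradient u x, gradient v x⟫ ^ 2) with hh
  -- gradient v vanishes outside tsupport v
  have hgv0 : ∀ x ∉ tsupport v, gradient v x = 0 := by
    intro x hx
    have : fderiv ℝ v x = 0 :=
      image_eq_zero_of_notMem_tsupport (fun hx' => hx (tsupport_fderiv_subset ℝ hx'))
    simp [gradient, this]
  -- continuity of gradients
  have hgu_cont : ContinuousOn (gradient u) B := by
    have := hu.continuousOn_fderiv_of_isOpen isOpen_ball le_rfl
    exact ((InnerProductSpace.toDual ℝ _).symm.continuous.comp_continuousOn this)
  have hgv_cont : Continuous (gradient v) := by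
    have := hv.continuous_fderiv one_ne_zero
    exact (InnerProductSpace.toDual ℝ _).symm.continuous.comp this
  have hsqrt_pos : ∀ x, (0:ℝ) < Real.sqrt (1 + ‖gradient u x‖ ^ 2) := by
    intro x
    apply Real.sqrt_pos.2
    positivity
  have hf_cont : ContinuousOn f B := by
    apply ContinuousOn.div
    · exact hgv_cont.continuousOn.inner hgu_cont
    · exact Real.continuous_sqrt.comp_continuousOn
        (continuousOn_const.add ((hgu_cont.norm).pow 2))
    · exact fun x _ => (hsqrt_pos x).ne'
  have hh_cont : ContinuousOn h B := by
    apply Real.continuous_sqrt.comp_continuousOn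
    exact ((continuousOn_const.add ((hgu_cont.norm).pow 2)).mul
      ((hgv_cont.continuousOn.norm).pow 2)).sub
      ((hgu_cont.inner hgv_cont.continuousOn).pow 2)
  -- support conditions
  have hf0 : ∀ x ∉ tsupport v, f x = 0 := by
    intro x hx; simp [hf, hgv0 x hx]
  have hh0 : ∀ x ∉ tsupport v, h x = 0 := by
    intro x hx; simp only [hh, hgv0 x hx, inner_zero_right, norm_zero]; simp
  have hKc : IsCompact (tsupport v) := hvc
  -- integrability
  have integ : ∀ g : EuclideanSpace ℝ (Fin n) → ℝ, ContinuousOn g B →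
      (∀ x ∉ tsupport v, g x = 0) → IntegrableOn g B := by
    intro g hg hg0
    have hK : IntegrableOn g (tsupport v) :=
      (hg.mono hvs).integrableOn_compact hKc
    have hsupp : Function.support g ⊆ tsupport v := by
      intro x hx
      by_contra hx'
      exact hx (hg0 x hx')
    have : Integrable g := (integrableOn_iff_integrable_of_support_subset hsupp).1 hK
    exact this.integrableOn
  have hfint : IntegrableOn f B := integ f hf_cont hf0
  have hhint : IntegrableOn h B := integ h hh_cont hh0
  -- pointwise bound
  have key : ∀ x ∈ B, f x ≤ C * ρ ^ α * h x := by
    intro x hx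
    set a := gradient u x
    set b := gradient v x
    have ha : ‖a‖ ≤ C * ρ ^ α := by
      have h0 : (0 : EuclideanSpace ℝ (Fin n)) ∈ B := mem_ball_self hρ
      have := hHolder x hx 0 h0
      rw [hDu0, sub_zero, sub_zero] at this
      refine this.trans ?_
      have hxρ : ‖x‖ ≤ ρ := by
        have := mem_ball_iff_norm.1 hx
        simpa using this.le
      exact mul_le_mul_of_nonneg_left
        (Real.rpow_le_rpow (norm_nonneg _) hxρ hα.1.le) hC
    have h1 : f x ≤ |⟪b, a⟫| := by
      have hs1 : (1:ℝ) ≤ Real.sqrt (1 + ‖a‖ ^ 2) := by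
        nlinarith [Real.sq_sqrt (show (0:ℝ) ≤ 1 + ‖a‖ ^ 2 by positivity),
          Real.sqrt_nonneg (1 + ‖a‖ ^ 2), sq_nonneg ‖a‖]
      calc f x ≤ |⟪b, a⟫| / Real.sqrt (1 + ‖a‖ ^ 2) := by
            apply div_le_div_of_nonneg_right (le_abs_self _) (hsqrt_pos x).le
        _ ≤ |⟪b, a⟫| := div_le_self (abs_nonneg _) hs1
    have h2 : |⟪b, a⟫| ≤ C * ρ ^ α * ‖b‖ := by
      calc |⟪b, a⟫| ≤ ‖b‖ * ‖a‖ := abs_real_inner_le_norm b a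
        _ ≤ ‖b‖ * (C * ρ ^ α) := mul_le_mul_of_nonneg_left ha (norm_nonneg _)
        _ = C * ρ ^ α * ‖b‖ := by ring
    have h3 : ‖b‖ ≤ h x := by
      rw [hh]
      have hcs : ⟪a, b⟫ ^ 2 ≤ ‖a‖ ^ 2 * ‖b‖ ^ 2 := by
        have := abs_real_inner_le_norm a b
        calc ⟪a, b⟫ ^ 2 = |⟪a, b⟫| ^ 2 := (sq_abs _).symm
          _ ≤ (‖a‖ * ‖b‖) ^ 2 := by
              exact pow_le_pow_left₀ (abs_nonneg _) this 2
          _ = ‖a‖ ^ 2 * ‖b‖ ^ 2 := by ring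
      have : ‖b‖ ^ 2 ≤ (1 + ‖a‖ ^ 2) * ‖b‖ ^ 2 - ⟪a, b⟫ ^ 2 := by nlinarith
      calc ‖b‖ = Real.sqrt (‖b‖ ^ 2) := by
            rw [Real.sqrt_sq (norm_nonneg _)]
        _ ≤ _ := Real.sqrt_le_sqrt this
    calc f x ≤ C * ρ ^ α * ‖b‖ := h1.trans h2
      _ ≤ C * ρ ^ α * h x := by
          apply mul_le_mul_of_nonneg_left h3 (by positivity)
  rw [show C * ρ ^ α * ∫ x in B, h x = ∫ x in B, C * ρ ^ α * h x by
    rw [MeasureTheory.integral_const_mul]]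
  exact setIntegral_mono_on hfint (hhint.const_mul _) measurableSet_ball key
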